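/- Let R = ℚ[t,v,s] and g = s + v + s^3·v ∈ R. Then ⟨t, v·g⟩ is strictly contained in ⟨t, g⟩; in particular the weak transform (⟨tv, v²g⟩ : v) differs from the strict transform (⟨tv, v²g⟩ : v^∞). -/

import Mathlib

open MvPolynomial

private lemma key :
    (X 2 + X 1 + X 2 ^ 3 * X 1 : MvPolynomial (Fin 3) ℚ) ∉
      Ideal.span {(X 0 : MvPolynomial (Fin 3) ℚ),
        X 1 * (X 2 + X 1 + X 2 ^ 3 * X 1)} := by
  intro h
  obtain ⟨a, b, hab⟩ := Ideal.mem_span_pair.mp h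
  have h2 := congrArg (eval ![0, 0, 1]) hab
  simp at h2

/-- In `R = ℚ[t,v,s]` with `g = s + v + s³v`, the weak transform `⟨t, vg⟩`
is strictly contained in the strict transform `⟨t, g⟩`; in particular
`(⟨tv, v²g⟩ : v)` differs from the saturation `(⟨tv, v²g⟩ : v^∞) = ⋃ₖ (⟨tv, v²g⟩ : vᵏ)`. -/
theorem stmt_3 :
    letI R := MvPolynomial (Fin 3) ℚ
    letI t : R := X 0
    letI v : R := X 1
    letI s : R := X 2
    letI g : R := s + v + s ^ 3 * v
    Ideal.span {t, v * g} < Ideal.span {t, g} ∧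
      (Ideal.span {t * v, v ^ 2 * g}).colon (Ideal.span {v}) ≠
        ⨆ k : ℕ, (Ideal.span {t * v, v ^ 2 * g}).colon (Ideal.span {v ^ k}) := by
  set R := MvPolynomial (Fin 3) ℚ
  set t : R := X 0 with ht
  set v : R := X 1 with hv
  set s : R := X 2 with hs
  set g : R := s + v + s ^ 3 * v with hg
  have hgmem : g ∉ Ideal.span {t, v * g} := key
  have hvne : v ≠ 0 := X_ne_zero 1
  -- key fact for part 2: v*g ∉ ⟨tv, v²g⟩
  have hvg : v * g ∉ Ideal.span {t * v, v ^ 2 * g} := by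
    intro h
    obtain ⟨a, b, hab⟩ := Ideal.mem_span_pair.mp h
    apply hgmem
    apply Ideal.mem_span_pair.mpr ⟨a, b, ?_⟩
    have : v * (a * t + b * (v * g)) = v * g := by linear_combination hab
    exact mul_left_cancel₀ hvne this
  constructor
  · have hle : Ideal.span {t, v * g} ≤ Ideal.span {t, g} := by
      rw [Ideal.span_le]
      rintro x hx
      simp only [Set.mem_insert_iff, Set.mem_singleton_iff] at hx
      rcases hx with rfl | rfl
      · exact Ideal.subset_span (by simp)
      · exact Ideal.mul_mem_left _ v (Ideal.subset_span (by simp))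
    exact lt_of_le_not_ge hle fun h => hgmem (h (Ideal.subset_span (by simp)))
  · intro heq
    have hR : g ∈ ⨆ k : ℕ, (Ideal.span {t * v, v ^ 2 * g}).colon (Ideal.span {v ^ k}) := by
      apply Ideal.mem_iSup_of_mem 2
      rw [Ideal.mem_colon_span_singleton]
      have : g * v ^ 2 = v ^ 2 * g := by ring
      rw [this]
      exact Ideal.subset_span (by simp)
    rw [← heq, Ideal.mem_colon_span_singleton] at hR
    rw [mul_comm g v] at hR
    exact hvg hR
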